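/- If n \ge 9 is an odd composite integer, then n divides 180 \cdot (n-7)!. -/

import Mathlib

lemma aux_mul_dvd_factorial {a b k : ℕ} (ha : 0 < a) (hab : a < b) (hbk : b ≤ k) :
    a * b ∣ k.factorial := by
  have h1 : a ∣ (b - 1).factorial := Nat.dvd_factorial ha (by omega)
  have h2 : a * b ∣ b.factorial := by
    rw [← Nat.mul_factorial_pred (by omega : b ≠ 0), mul_comm a b]
    exact mul_dvd_mul_left b h1
  exact h2.trans (Nat.factorial_dvd_factorial hbk)

/-- If `n ≥ 9` is an odd composite integer, then `n` divides `180·(n-7)!`. -/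
theorem odd_composite_dvd_factorial (n : ℕ) (hn : 9 ≤ n) (hodd : Odd n)
    (hcomp : ¬ n.Prime) :
    n ∣ 180 * (n - 7).factorial := by
  rw [Nat.odd_iff] at hodd
  by_cases h15 : n < 15
  · interval_cases n
    · decide
    · omega
    · exact absurd (by norm_num) hcomp
    · omega
    · exact absurd (by norm_num) hcomp
    · omega
  · push_neg at h15
    suffices h : n ∣ (n - 7).factorial by exact h.mul_left 180
    set p := n.minFac with hp_def
    have hp : p.Prime := Nat.minFac_prime (by omega)
    have hpd : p ∣ n := Nat.minFac_dvd n
    set m := n / p with hm_def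
    have hpm : p * m = n := Nat.mul_div_cancel' hpd
    have hp3 : 3 ≤ p := by
      rcases hp.two_le.lt_or_eq with h | h
      · omega
      · exfalso
        obtain ⟨c, hc⟩ := hpd
        rw [← h] at hc
        omega
    have hple : p ≤ m := by
      have hsq : p * p ≤ p * m := by
        rw [hpm]
        have := Nat.minFac_sq_le_self (by omega : 0 < n) hcomp
        simpa [sq] using this
      exact Nat.le_of_mul_le_mul_left hsq hp.pos
    rcases lt_or_eq_of_le hple with hlt | heq
    · have hm3 : m ≤ n / 3 := Nat.div_le_div_left hp3 (by omega)
      have hmn : m ≤ n - 7 := by omega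
      calc n = p * m := hpm.symm
        _ ∣ (n - 7).factorial := aux_mul_dvd_factorial hp.pos hlt hmn
    · have hn2 : n = p * p := by rw [← hpm, ← heq]
      have hp5 : 5 ≤ p := by
        rcases Nat.lt_or_ge p 5 with h | h
        · interval_cases p <;> omega
        · exact h
      have h5p : 5 * p ≤ p * p := Nat.mul_le_mul_right p hp5
      have h2p : 2 * p ≤ n - 7 := by omega
      have hd : p * (2 * p) ∣ (n - 7).factorial :=
        aux_mul_dvd_factorial hp.pos (by omega) h2p
      calc n = p * p := hn2
        _ ∣ p * (2 * p) := ⟨2, by ring⟩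
        _ ∣ (n - 7).factorial := hd
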